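/- Let d ≥ 1 and M > 0. There exists a constant C > 0 depending only on d and M such that the following holds. Let u : ℝ × ℝ^d → ℝ be continuously differentiable with |∂_t u(t,x)| ≤ M and |∂_{x_i} u(t,x)| ≤ M for all (t,x) and all i, let φ : ℝ^d → ℝ be three times continuously differentiable with all partial derivatives of order ≤ 3 bounded in absolute value by M, and suppose u(T, x) = φ(x) for all x ∈ ℝ^d, where T ∈ ℝ. Let A ∈ ℝ^{d×d} be symmetric and β ∈ ℝ^d with all entries bounded in absolute value by M; let μ ∈ (0, M], γ̄, ψ̄, κ ∈ [−M, M], z ∈ ℝ^d, and let n ∈ ℝ^d be a unit vector. Assume the sticky boundary relation at (T,z): −μ 𝒜_{A,β}φ(z) + ∇φ(z)·n + γ̄ φ(z) = ψ̄. Let h ∈ (0,1), r ∈ (0, √h], and t′ ∈ ℝ with T ≤ t′ ≤ T + h. Let Y_k > 0, Z′ ∈ ℝ, and define Y′ = (1 + hκ)Y_k, Y_χ = Y′ + 2rγ̄ Y_k + 2r²γ̄² Y_k, and Z_χ = Z′ + (−2rμ 𝒜_{A,β}φ(z) − 2r²γ̄μ 𝒜_{A,β}φ(z) − 2rψ̄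 − 2r²γ̄ψ̄) Y_k. Then |u(T, z + rn)·Y_χ + Z_χ − u(t′, z − rn)·Y′ − Z′| ≤ C h Y_k. -/

import Mathlib

/-- The second-order differential operator
`𝒜_{A,β} v (y) = (1/2) ∑_{i,j} A i j ∂²v/∂yᵢ∂yⱼ (y) + ∑ i, β i ∂v/∂yᵢ (y)`. -/
noncomputable def stickyGen {d : ℕ} (A : Matrix (Fin d) (Fin d) ℝ) (β : Fin d → ℝ)
    (v : (Fin d → ℝ) → ℝ) (y : Fin d → ℝ) : ℝ :=
  (1 / 2) * ∑ i, ∑ j, A i j *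
      iteratedFDeriv ℝ 2 v y ![Pi.single i 1, Pi.single j 1]
    + ∑ i, β i * fderiv ℝ v y (Pi.single i 1)

private lemma abs_mul_le' {x y bx by' : ℝ} (hx : |x| ≤ bx) (hy : |y| ≤ by') :
    |x * y| ≤ bx * by' := by
  rw [abs_mul]
  exact mul_le_mul hx hy (abs_nonneg _) ((abs_nonneg _).trans hx)

set_option maxHeartbeats 2000000 in
/-- Lemma 4.5 (Case IV of the sticky Euler scheme): one-step error estimate for the
final step in which both the spatial domain and the terminal time are overshot. -/
theorem sticky_euler_caseIV_one_step (d : ℕ) (hd : 1 ≤ d) (M : ℝ) (hM : 0 < M) :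
    ∃ C : ℝ, 0 < C ∧
      ∀ u : ℝ × (Fin d → ℝ) → ℝ, ContDiff ℝ 1 u →
      (∀ (t : ℝ) (x : Fin d → ℝ), |deriv (fun τ => u (τ, x)) t| ≤ M) →
      (∀ (t : ℝ) (x : Fin d → ℝ) (i : Fin d),
        |fderiv ℝ (fun y => u (t, y)) x (Pi.single i 1)| ≤ M) →
      ∀ φ : (Fin d → ℝ) → ℝ, ContDiff ℝ 3 φ →
      (∀ m : ℕ, m ≤ 3 → ∀ y : Fin d → ℝ, ‖iteratedFDeriv ℝ m φ y‖ ≤ M) →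
      ∀ T : ℝ, (∀ x : Fin d → ℝ, u (T, x) = φ x) →
      ∀ A : Matrix (Fin d) (Fin d) ℝ, A.IsSymm → (∀ i j, |A i j| ≤ M) →
      ∀ β : Fin d → ℝ, (∀ i, |β i| ≤ M) →
      ∀ μ : ℝ, 0 < μ → μ ≤ M →
      ∀ γ ψ κ : ℝ, |γ| ≤ M → |ψ| ≤ M → |κ| ≤ M →
      ∀ z n : Fin d → ℝ, (∑ i, (n i) ^ 2 = 1) →
      -- the sticky (second-order) boundary relation holds at (T, z)
      (-μ * stickyGen A β φ z + fderiv ℝ φ z n + γ * φ z = ψ) →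
      ∀ h r t' : ℝ, 0 < h → h < 1 → 0 < r → r ≤ Real.sqrt h →
      T ≤ t' → t' ≤ T + h →
      ∀ Yk Z' : ℝ, 0 < Yk →
      |u (T, z + r • n) *
            ((1 + h * κ) * Yk + 2 * r * γ * Yk + 2 * r ^ 2 * γ ^ 2 * Yk)
          + (Z' + (-(2 * r * μ * stickyGen A β φ z)
              - 2 * r ^ 2 * γ * μ * stickyGen A β φ z
              - 2 * r * ψ - 2 * r ^ 2 * γ * ψ) * Yk)
          - u (t', z - r • n) * ((1 + h * κ) * Yk) - Z'|
        ≤ C * h * Yk := by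
  refine ⟨3*M*(1+M) + 4*M^2 + 2*M^2*(1+M), by positivity, ?_⟩
  intro u hu hut hux φ hφc hφb T huT A hAsym hA β hβ μ hμ hμM γ ψ κ hγ hψM hκ z n hn2
    hrel h r t' hh hh1 hr hrs ht1 ht2 Yk Z' hYk
  subst hrel
  -- basic scalar facts
  have hr2 : r ^ 2 ≤ h := by
    nlinarith [Real.sq_sqrt hh.le, Real.sqrt_nonneg h]
  have hr1 : r ≤ 1 := by nlinarith [sq_nonneg (r - 1)]
  -- the normal vector has sup norm at most 1
  have hn : ‖n‖ ≤ 1 := by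
    rw [pi_norm_le_iff_of_nonneg zero_le_one]
    intro i
    have hle : (n i) ^ 2 ≤ 1 := by
      rw [← hn2]
      exact Finset.single_le_sum (fun j _ => sq_nonneg (n j)) (Finset.mem_univ i)
    rw [Real.norm_eq_abs]
    nlinarith [abs_nonneg (n i), sq_abs (n i)]
  -- derivative bounds for φ
  have hφ1 : ∀ y, ‖fderiv ℝ φ y‖ ≤ M := by
    intro y
    calc ‖fderiv ℝ φ y‖ = ‖iteratedFDeriv ℝ 1 φ y‖ := by
          rw [← norm_iteratedFDeriv_fderiv, norm_iteratedFDeriv_zero]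
      _ ≤ M := hφb 1 (by norm_num) y
  have hφ2 : ∀ y, ‖fderiv ℝ (fderiv ℝ φ) y‖ ≤ M := by
    intro y
    calc ‖fderiv ℝ (fderiv ℝ φ) y‖ = ‖iteratedFDeriv ℝ 2 φ y‖ := by
          rw [← norm_iteratedFDeriv_fderiv, ← norm_iteratedFDeriv_fderiv,
            norm_iteratedFDeriv_zero]
      _ ≤ M := hφb 2 (by norm_num) y
  have hdφ : Differentiable ℝ φ := hφc.differentiable (by norm_num)
  have hdφ' : Differentiable ℝ (fderiv ℝ φ) :=
    (hφc.fderiv_right (m := 2) (by norm_num)).differentiable (by norm_num)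
  -- abbreviations
  set D : ℝ := fderiv ℝ φ z n with hD
  set G : ℝ := stickyGen A β φ z with hG
  set a : ℝ := φ (z + r • n) with ha
  set c : ℝ := φ (z - r • n) with hc
  set b : ℝ := u (t', z - r • n) with hb
  -- |D| ≤ M
  have hb3 : |D| ≤ M := by
    have h1 : ‖(fderiv ℝ φ z) n‖ ≤ ‖fderiv ℝ φ z‖ * ‖n‖ :=
      ContinuousLinearMap.le_opNorm _ _
    rw [Real.norm_eq_abs] at h1
    calc |D| ≤ ‖fderiv ℝ φ z‖ * ‖n‖ := h1
      _ ≤ M * 1 := mul_le_mul (hφ1 z) hn (norm_nonneg _) hM.le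
      _ = M := mul_one M
  -- points are in the closed ball of radius r around z
  have hmem1 : z + r • n ∈ Metric.closedBall z r := by
    rw [Metric.mem_closedBall, dist_eq_norm, add_sub_cancel_left, norm_smul,
      Real.norm_eq_abs, abs_of_pos hr]
    calc r * ‖n‖ ≤ r * 1 := by nlinarith [norm_nonneg n]
      _ = r := mul_one r
  have hmem2 : z - r • n ∈ Metric.closedBall z r := by
    rw [Metric.mem_closedBall, dist_eq_norm, sub_sub_cancel_left, norm_neg, norm_smul,
      Real.norm_eq_abs, abs_of_pos hr]
    calc r * ‖n‖ ≤ r * 1 := by nlinarith [norm_nonneg n]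
      _ = r := mul_one r
  -- the fderiv of φ is M-Lipschitz
  have lipfd : ∀ y, ‖fderiv ℝ φ y - fderiv ℝ φ z‖ ≤ M * ‖y - z‖ := by
    intro y
    exact convex_univ.norm_image_sub_le_of_norm_fderiv_le
      (fun x _ => (hdφ' x)) (fun x _ => hφ2 x) (Set.mem_univ z) (Set.mem_univ y)
  -- key Taylor bound: |a - c - 2rD| ≤ 2Mh
  have key1 : |a - c - 2 * r * D| ≤ 2 * M * h := by
    set g : (Fin d → ℝ) → ℝ := fun y => φ y - fderiv ℝ φ z y with hgdef
    have hgd : ∀ y ∈ Metric.closedBall z r,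
        HasFDerivWithinAt g (fderiv ℝ φ y - fderiv ℝ φ z) (Metric.closedBall z r) y :=
      fun y _ => ((hdφ y).hasFDerivAt.sub ((fderiv ℝ φ z).hasFDerivAt)).hasFDerivWithinAt
    have hbound : ∀ y ∈ Metric.closedBall z r,
        ‖fderiv ℝ φ y - fderiv ℝ φ z‖ ≤ M * r := by
      intro y hy
      rw [Metric.mem_closedBall, dist_eq_norm] at hy
      calc ‖fderiv ℝ φ y - fderiv ℝ φ z‖ ≤ M * ‖y - z‖ := lipfd y
        _ ≤ M * r := by nlinarith [norm_nonneg (y - z)]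
    have hmvt := (convex_closedBall z r).norm_image_sub_le_of_norm_hasFDerivWithin_le
      hgd hbound hmem2 hmem1
    have hpt : (z + r • n) - (z - r • n) = (2 * r) • n := by
      rw [two_mul, add_smul]; abel
    have hgv : g (z + r • n) - g (z - r • n) = a - c - 2 * r * D := by
      simp only [hgdef]
      have : fderiv ℝ φ z (z + r • n) - fderiv ℝ φ z (z - r • n) = 2 * r * D := by
        rw [← map_sub, hpt, map_smul, smul_eq_mul, hD]
      rw [ha, hc]; linarith [this]
    rw [hgv, Real.norm_eq_abs] at hmvt
    have hnorm2 : ‖(z + r • n) - (z - r • n)‖ ≤ 2 * r := by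
      rw [hpt, norm_smul, Real.norm_eq_abs, abs_of_pos (by linarith : (0:ℝ) < 2 * r)]
      nlinarith [norm_nonneg n]
    calc |a - c - 2 * r * D| ≤ M * r * ‖(z + r • n) - (z - r • n)‖ := hmvt
      _ ≤ M * r * (2 * r) := mul_le_mul_of_nonneg_left hnorm2 (mul_nonneg hM.le hr.le)
      _ ≤ 2 * M * h := by nlinarith
  -- time-increment bound
  have key2 : |φ (z - r • n) - b| ≤ M * h := by
    have hud : Differentiable ℝ (fun τ => u (τ, z - r • n)) :=
      (hu.differentiable one_ne_zero).comp (differentiable_id.prodMk (differentiable_const _))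
    have hmvt := convex_univ.norm_image_sub_le_of_norm_deriv_le
      (f := fun τ => u (τ, z - r • n)) (fun τ _ => hud τ)
      (fun τ _ => by rw [Real.norm_eq_abs]; exact hut τ (z - r • n))
      (Set.mem_univ T) (Set.mem_univ t')
    rw [Real.norm_eq_abs, Real.norm_eq_abs] at hmvt
    rw [← huT (z - r • n), abs_sub_comm]
    calc |u (t', z - r • n) - u (T, z - r • n)| ≤ M * |t' - T| := hmvt
      _ ≤ M * h := by
          rw [abs_of_nonneg (by linarith)]
          nlinarith
  -- spatial Lipschitz bound for φ
  have key4 : |a - φ z| ≤ M * r := by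
    have hmvt := convex_univ.norm_image_sub_le_of_norm_fderiv_le
      (fun y _ => (hdφ y)) (fun y _ => hφ1 y) (Set.mem_univ z) (Set.mem_univ (z + r • n))
    rw [Real.norm_eq_abs] at hmvt
    calc |a - φ z| ≤ M * ‖(z + r • n) - z‖ := hmvt
      _ ≤ M * r := by
          rw [add_sub_cancel_left, norm_smul, Real.norm_eq_abs, abs_of_pos hr]
          nlinarith [norm_nonneg n, mul_nonneg hM.le hr.le, hn]
  -- simple scalar absolute-value bounds
  have habs1 : |1 + h * κ| ≤ 1 + M := by
    calc |1 + h * κ| ≤ |1| + |h * κ| := abs_add_le _ _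
      _ ≤ 1 + M := by
          rw [abs_one, abs_mul, abs_of_pos hh]
          nlinarith [abs_nonneg κ]
  have habsrγ : |1 + r * γ| ≤ 1 + M := by
    calc |1 + r * γ| ≤ |1| + |r * γ| := abs_add_le _ _
      _ ≤ 1 + M := by
          rw [abs_one, abs_mul, abs_of_pos hr]
          nlinarith [abs_nonneg γ]
  have habs2r : |2 * r| ≤ 2 := by
    rw [abs_of_pos (by linarith)]; linarith
  have habs2r2 : |2 * r ^ 2| ≤ 2 * h := by
    rw [abs_of_pos (by positivity)]; linarith
  have habsYk : |Yk| ≤ Yk := le_of_eq (abs_of_pos hYk)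
  have habshκ : |h * κ| ≤ h * M := by
    rw [abs_mul, abs_of_pos hh]
    exact mul_le_mul_of_nonneg_left hκ hh.le
  -- decomposition of the error
  rw [huT (z + r • n), ← ha]
  have hE : a * ((1 + h * κ) * Yk + 2 * r * γ * Yk + 2 * r ^ 2 * γ ^ 2 * Yk)
        + (Z' + (-(2 * r * μ * G) - 2 * r ^ 2 * γ * μ * G
            - 2 * r * (-μ * G + D + γ * φ z)
            - 2 * r ^ 2 * γ * (-μ * G + D + γ * φ z)) * Yk)
        - b * ((1 + h * κ) * Yk) - Z'
      = (a - c - 2 * r * D) * ((1 + h * κ) * Yk)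
        + (c - b) * ((1 + h * κ) * Yk)
        + (2 * r * D) * ((h * κ) * Yk)
        + (-(2 * r ^ 2 * γ)) * (D * Yk)
        + ((2 * r) * ((1 + r * γ) * γ)) * ((a - φ z) * Yk) := by ring
  rw [hE]
  -- bound each term
  have hT1 : |(a - c - 2 * r * D) * ((1 + h * κ) * Yk)| ≤ (2 * M * (1 + M)) * (h * Yk) := by
    calc |(a - c - 2 * r * D) * ((1 + h * κ) * Yk)|
        ≤ (2 * M * h) * ((1 + M) * Yk) := abs_mul_le' key1 (abs_mul_le' habs1 habsYk)
      _ = (2 * M * (1 + M)) * (h * Yk) := by ring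
  have hT2 : |(c - b) * ((1 + h * κ) * Yk)| ≤ (M * (1 + M)) * (h * Yk) := by
    calc |(c - b) * ((1 + h * κ) * Yk)|
        ≤ (M * h) * ((1 + M) * Yk) := abs_mul_le' key2 (abs_mul_le' habs1 habsYk)
      _ = (M * (1 + M)) * (h * Yk) := by ring
  have hT3a : |(2 * r * D) * ((h * κ) * Yk)| ≤ (2 * M ^ 2) * (h * Yk) := by
    calc |(2 * r * D) * ((h * κ) * Yk)|
        ≤ (2 * M) * ((h * M) * Yk) :=
          abs_mul_le' (abs_mul_le' habs2r hb3) (abs_mul_le' habshκ habsYk)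
      _ = (2 * M ^ 2) * (h * Yk) := by ring
  have hT3b : |(-(2 * r ^ 2 * γ)) * (D * Yk)| ≤ (2 * M ^ 2) * (h * Yk) := by
    have h1 : |(-(2 * r ^ 2 * γ))| ≤ (2 * h) * M := by
      rw [abs_neg]; exact abs_mul_le' habs2r2 hγ
    calc |(-(2 * r ^ 2 * γ)) * (D * Yk)|
        ≤ ((2 * h) * M) * (M * Yk) := abs_mul_le' h1 (abs_mul_le' hb3 habsYk)
      _ = (2 * M ^ 2) * (h * Yk) := by ring
  have hT4 : |((2 * r) * ((1 + r * γ) * γ)) * ((a - φ z) * Yk)|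
      ≤ (2 * M ^ 2 * (1 + M)) * (h * Yk) := by
    have h1 : |2 * r| ≤ 2 * r := le_of_eq (abs_of_pos (by linarith))
    calc |((2 * r) * ((1 + r * γ) * γ)) * ((a - φ z) * Yk)|
        ≤ ((2 * r) * ((1 + M) * M)) * ((M * r) * Yk) :=
          abs_mul_le' (abs_mul_le' h1 (abs_mul_le' habsrγ hγ)) (abs_mul_le' key4 habsYk)
      _ ≤ (2 * M ^ 2 * (1 + M)) * (h * Yk) := by
          nlinarith [mul_nonneg (mul_nonneg
            (show (0:ℝ) ≤ 2 * M ^ 2 * (1 + M) by positivity) hYk.le)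
            (sub_nonneg.2 hr2)]
  have habssum : |(a - c - 2 * r * D) * ((1 + h * κ) * Yk)
        + (c - b) * ((1 + h * κ) * Yk)
        + (2 * r * D) * ((h * κ) * Yk)
        + (-(2 * r ^ 2 * γ)) * (D * Yk)
        + ((2 * r) * ((1 + r * γ) * γ)) * ((a - φ z) * Yk)|
      ≤ |(a - c - 2 * r * D) * ((1 + h * κ) * Yk)|
        + |(c - b) * ((1 + h * κ) * Yk)|
        + |(2 * r * D) * ((h * κ) * Yk)|
        + |(-(2 * r ^ 2 * γ)) * (D * Yk)|
        + |((2 * r) * ((1 + r * γ) * γ)) * ((a - φ z) * Yk)| := by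
    exact (abs_add_le _ _).trans (by
      gcongr
      exact (abs_add_le _ _).trans (by
        gcongr
        exact (abs_add_le _ _).trans (by
          gcongr
          exact abs_add_le _ _)))
  have hC : (3*M*(1+M) + 4*M^2 + 2*M^2*(1+M)) * h * Yk
      = (2 * M * (1 + M)) * (h * Yk) + (M * (1 + M)) * (h * Yk)
        + (2 * M ^ 2) * (h * Yk) + (2 * M ^ 2) * (h * Yk)
        + (2 * M ^ 2 * (1 + M)) * (h * Yk) := by ring
  linarith [habssum, hT1, hT2, hT3a, hT3b, hT4]
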